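/- Let (E, ℰ, μ) be a σ-finite measure space, let I be a nonempty index set, let λ : E → [0,∞) and g : E → [0,∞) be measurable, and for each i ∈ I let H_i : E × ℝ^d → ℝ be ℰ⊗Borel-measurable with |H_i(e,z) − H_i(e,z')| ≤ λ(e)·|z − z'| for all e ∈ E and z, z' ∈ ℝ^d, and |H_i(e,0)| ≤ g(e) for all e ∈ E. Then there exists an ℰ⊗Borel-measurable function H* : E × ℝ^d → ℝ such that: (i) |H*(e,z) − H*(e,z')| ≤ λ(e)·|z − z'| for all e ∈ E and z, z' ∈ ℝ^d; (ii) for every z ∈ ℝ^d, H*(·,z) is an essential infimum of the family (H_i(·,z))_{i∈I}, i.e. H*(·,z) ≤ H_i(·,z) μ-almost everywhere for all i ∈ I, and every measurable h : E → ℝ with h ≤ H_i(·,z) μ-almost everywhere for all i ∈ I satisfies h ≤ H*(·,z) μ-almost everywhere. -/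

import Mathlib

open MeasureTheory

/-- given a family `(H_i)_{i ∈ I}` of jointly measurable functions on
`E × ℝᵈ`, Lipschitz in `z` with measurable stochastic Lipschitz constant `λ` and dominated
at `z = 0`, there exists a jointly measurable `H*` with the same stochastic Lipschitz
modulus which, for every `z`, is an essential infimum of the family `(H_i(·,z))_{i ∈ I}`. -/
theorem stmt7 {E : Type*} [MeasurableSpace E] (μ : Measure E) [SigmaFinite μ]
    {I : Type*} [Nonempty I] (d : ℕ)
    (lam g : E → ℝ) (hlam : Measurable lam) (hlam_nonneg : ∀ e, 0 ≤ lam e)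
    (hg : Measurable g) (hg_nonneg : ∀ e, 0 ≤ g e)
    (H : I → E × EuclideanSpace ℝ (Fin d) → ℝ)
    (hH_meas : ∀ i, Measurable (H i))
    (hH_lip : ∀ i, ∀ e, ∀ z z' : EuclideanSpace ℝ (Fin d),
      |H i (e, z) - H i (e, z')| ≤ lam e * ‖z - z'‖)
    (hH_dom : ∀ i, ∀ e, |H i (e, 0)| ≤ g e) :
    ∃ Hstar : E × EuclideanSpace ℝ (Fin d) → ℝ, Measurable Hstar ∧
      (∀ e, ∀ z z' : EuclideanSpace ℝ (Fin d),
        |Hstar (e, z) - Hstar (e, z')| ≤ lam e * ‖z - z'‖) ∧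
      (∀ z : EuclideanSpace ℝ (Fin d),
        (∀ i, ∀ᵐ e ∂μ, Hstar (e, z) ≤ H i (e, z)) ∧
        (∀ h : E → ℝ, Measurable h → (∀ i, ∀ᵐ e ∂μ, h e ≤ H i (e, z)) →
          ∀ᵐ e ∂μ, h e ≤ Hstar (e, z))) := by
  classical
  obtain ⟨ν, hνfin, hμν, hνμ⟩ := exists_isFiniteMeasure_absolutelyContinuous μ
  obtain ⟨D, hD⟩ := TopologicalSpace.exists_dense_seq (EuclideanSpace ℝ (Fin d))
  -- uniform lower bound on the family
  have hbd : ∀ i e (z : EuclideanSpace ℝ (Fin d)), -(g e + lam e * ‖z‖) ≤ H i (e, z) := by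
    intro i e z
    have h1 := hH_lip i e z 0
    have h2 := hH_dom i e
    rw [sub_zero] at h1
    have := abs_sub_abs_le_abs_sub (H i (e, z)) (H i (e, 0))
    have habs : |H i (e, z)| ≤ g e + lam e * ‖z‖ := by linarith
    linarith [neg_abs_le (H i (e, z)), habs]
  -- bounded-below property of countable subfamilies
  have hBdd : ∀ (u : ℕ → I) (e : E) (z : EuclideanSpace ℝ (Fin d)),
      BddBelow (Set.range fun k => H (u k) (e, z)) := by
    intro u e z
    exact ⟨-(g e + lam e * ‖z‖), by rintro _ ⟨k, rfl⟩; exact hbd (u k) e z⟩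
  -- inf over a countable subfamily
  set F : (ℕ → I) → EuclideanSpace ℝ (Fin d) → E → ℝ :=
    fun u z e => ⨅ k, H (u k) (e, z) with hF
  have hFmeas : ∀ u z, Measurable (F u z) := by
    intro u z
    exact Measurable.iInf fun k =>
      (hH_meas (u k)).comp (measurable_id.prodMk measurable_const)
  have hint : ∀ u z, Integrable (fun e => Real.arctan (F u z e)) ν := by
    intro u z
    refine Integrable.mono' (integrable_const (Real.pi / 2))
      ((Real.measurable_arctan.comp (hFmeas u z)).aestronglyMeasurable) ?_
    filter_upwards with e
    rw [Real.norm_eq_abs, abs_le]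
    exact ⟨(Real.neg_pi_div_two_lt_arctan _).le, (Real.arctan_lt_pi_div_two _).le⟩
  -- the minimization targets
  set G : ℕ → (ℕ → I) → ℝ := fun n u => ∫ e, Real.arctan (F u (D n) e) ∂ν with hG
  have hGbdd : ∀ n, BddBelow (Set.range (G n)) := by
    intro n
    refine ⟨-(Real.pi / 2) * (ν Set.univ).toReal, ?_⟩
    rintro _ ⟨u, rfl⟩
    have : ∫ (_ : E), -(Real.pi / 2) ∂ν ≤ G n u := by
      refine integral_mono (integrable_const _) (hint u (D n)) fun e => ?_
      exact (Real.neg_pi_div_two_lt_arctan _).le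
    simpa [integral_const, smul_eq_mul, mul_comm, measureReal_def] using this
  set α : ℕ → ℝ := fun n => ⨅ u : ℕ → I, G n u with hα
  -- choose near-optimal subfamilies
  have hsel : ∀ n m : ℕ, ∃ u : ℕ → I, G n u < α n + 1 / (m + 1) := by
    intro n m
    refine exists_lt_of_ciInf_lt ?_
    exact lt_add_of_pos_right _ (by positivity)
  choose s hs using hsel
  -- combine everything into one countable subfamily
  set q : ℕ ≃ ℕ × ℕ × ℕ := (Denumerable.eqv (ℕ × ℕ × ℕ)).symm with hq
  set t : ℕ → I := fun k => s (q k).1 (q k).2.1 (q k).2.2 with ht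
  set Hstar : E × EuclideanSpace ℝ (Fin d) → ℝ := fun p => ⨅ k, H (t k) p with hHstar
  have hHstar_eq : ∀ e z, Hstar (e, z) = F t z e := fun e z => rfl
  have hHstar_le : ∀ (k : ℕ) e z, Hstar (e, z) ≤ H (t k) (e, z) := by
    intro k e z
    exact ciInf_le (hBdd t e z) k
  -- Hstar is below each chosen subfamily-inf
  have hHstar_le_s : ∀ n m e, Hstar (e, D n) ≤ F (s n m) (D n) e := by
    intro n m e
    refine le_ciInf fun j => ?_
    have := hHstar_le (q.symm (n, m, j)) e (D n)
    simpa [ht, hq, Equiv.apply_symm_apply] using this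
  -- Hstar(·, D n) achieves the infimum α n
  have hach : ∀ n, ∫ e, Real.arctan (Hstar (e, D n)) ∂ν = α n := by
    intro n
    have hge : α n ≤ ∫ e, Real.arctan (Hstar (e, D n)) ∂ν := ciInf_le (hGbdd n) t
    have hle : ∀ m : ℕ, ∫ e, Real.arctan (Hstar (e, D n)) ∂ν ≤ α n + 1 / (m + 1) := by
      intro m
      refine le_trans ?_ (hs n m).le
      refine integral_mono (hint t (D n)) (hint (s n m) (D n)) fun e => ?_
      exact Real.arctan_strictMono.monotone (hHstar_le_s n m e)
    have : ∫ e, Real.arctan (Hstar (e, D n)) ∂ν ≤ α n := by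
      refine le_of_forall_pos_le_add fun ε hε => ?_
      obtain ⟨m, hm⟩ := exists_nat_one_div_lt hε
      exact (hle m).trans (by push_cast; linarith [hm])
    linarith
  -- Claim A: at dense points, Hstar is a ν-a.e. lower bound
  have claimA : ∀ (i : I) (n : ℕ), ∀ᵐ e ∂ν, Hstar (e, D n) ≤ H i (e, D n) := by
    intro i n
    set t' : ℕ → I := fun k => Nat.casesOn k i t with ht'
    have hmin : ∀ e, F t' (D n) e = min (H i (e, D n)) (Hstar (e, D n)) := by
      intro e
      refine le_antisymm (le_min (ciInf_le (hBdd t' e (D n)) 0) ?_) ?_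
      · refine le_ciInf fun k => ?_
        exact ciInf_le (hBdd t' e (D n)) (k + 1)
      · refine le_ciInf fun k => ?_
        cases k with
        | zero => exact min_le_left _ _
        | succ k => exact (min_le_right _ _).trans (hHstar_le k e (D n))
    have hptle : ∀ e, Real.arctan (F t' (D n) e) ≤ Real.arctan (Hstar (e, D n)) := by
      intro e
      exact Real.arctan_strictMono.monotone (by rw [hmin]; exact min_le_right _ _)
    have hinteq : ∫ e, Real.arctan (F t' (D n) e) ∂ν
        = ∫ e, Real.arctan (Hstar (e, D n)) ∂ν := by
      refine le_antisymm (integral_mono (hint t' (D n)) (hint t (D n)) hptle) ?_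
      rw [hach n]
      exact ciInf_le (hGbdd n) t'
    have haeeq : (fun e => Real.arctan (F t' (D n) e))
        =ᵐ[ν] fun e => Real.arctan (Hstar (e, D n)) :=
      (integral_eq_iff_of_ae_le (hint t' (D n)) (hint t (D n))
        (Filter.Eventually.of_forall hptle)).mp hinteq
    filter_upwards [haeeq] with e he
    have : F t' (D n) e = Hstar (e, D n) := Real.arctan_injective he
    rw [hmin] at this
    exact min_eq_right_iff.mp this
  -- main properties
  refine ⟨Hstar, ?_, ?_, ?_⟩
  · exact Measurable.iInf fun k => hH_meas (t k)
  · -- Lipschitz property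
    have key : ∀ e (z z' : EuclideanSpace ℝ (Fin d)),
        Hstar (e, z) ≤ Hstar (e, z') + lam e * ‖z - z'‖ := by
      intro e z z'
      rw [hHstar_eq e z', hF]
      have : Hstar (e, z) - lam e * ‖z - z'‖ ≤ ⨅ k, H (t k) (e, z') := by
        refine le_ciInf fun k => ?_
        have h1 := hHstar_le k e z
        have h2 := hH_lip (t k) e z z'
        have := abs_le.mp h2
        linarith [this.1, this.2]
      linarith
    intro e z z'
    rw [abs_sub_le_iff]
    constructor
    · linarith [key e z z']
    · have := key e z' z
      rw [norm_sub_rev] at this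
      linarith
  · intro z
    constructor
    · -- essential lower bound
      intro i
      have hA : ∀ᵐ e ∂μ, ∀ n, Hstar (e, D n) ≤ H i (e, D n) := by
        refine Filter.Eventually.filter_mono hμν.ae_le ?_
        exact ae_all_iff.mpr fun n => claimA i n
      filter_upwards [hA] with e he
      refine le_of_forall_pos_le_add fun ε hε => ?_
      have hden : (0 : ℝ) < 2 * lam e + 1 := by linarith [hlam_nonneg e]
      set δ : ℝ := ε / (2 * lam e + 1) with hδ
      have hδpos : 0 < δ := div_pos hε hden
      obtain ⟨n, hn⟩ := hD.exists_dist_lt z hδpos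
      rw [dist_eq_norm] at hn
      have hlip1 : Hstar (e, z) ≤ Hstar (e, D n) + lam e * ‖z - D n‖ := by
        have h := abs_le.mp (by
          show |Hstar (e, z) - Hstar (e, D n)| ≤ lam e * ‖z - D n‖
          -- reuse Lipschitz of Hstar, proved directly:
          rw [abs_sub_le_iff]
          constructor
          · have : Hstar (e, z) - lam e * ‖z - D n‖ ≤ ⨅ k, H (t k) (e, D n) := by
              refine le_ciInf fun k => ?_
              have h1 := hHstar_le k e z
              have h2 := abs_le.mp (hH_lip (t k) e z (D n))
              linarith [h2.1, h2.2]
            have h3 : (⨅ k, H (t k) (e, D n)) = Hstar (e, D n) := rfl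
            linarith [h3 ▸ this]
          · have : Hstar (e, D n) - lam e * ‖z - D n‖ ≤ ⨅ k, H (t k) (e, z) := by
              refine le_ciInf fun k => ?_
              have h1 := hHstar_le k e (D n)
              have h2 := abs_le.mp (hH_lip (t k) e (D n) z)
              rw [norm_sub_rev] at h2
              linarith [h2.1, h2.2]
            have h3 : (⨅ k, H (t k) (e, z)) = Hstar (e, z) := rfl
            linarith [h3 ▸ this])
        linarith [h.1, h.2]
      have hlip2 : H i (e, D n) ≤ H i (e, z) + lam e * ‖z - D n‖ := by
        have h2 := abs_le.mp (hH_lip i e (D n) z)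
        rw [norm_sub_rev] at h2
        linarith [h2.1, h2.2]
      have hnorm : lam e * ‖z - D n‖ ≤ lam e * δ :=
        mul_le_mul_of_nonneg_left hn.le (hlam_nonneg e)
      have hfin : 2 * lam e * δ ≤ ε := by
        rw [hδ]
        rw [div_eq_iff hden.ne'] at *
        have : 2 * lam e * (ε / (2 * lam e + 1)) ≤ (2 * lam e + 1) * (ε / (2 * lam e + 1)) :=
          mul_le_mul_of_nonneg_right (by linarith) (le_of_lt (div_pos hε hden))
        calc 2 * lam e * (ε / (2 * lam e + 1)) ≤ (2 * lam e + 1) * (ε / (2 * lam e + 1)) := this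
          _ = ε := by field_simp
      linarith [he n]
    · -- maximality among essential lower bounds
      intro h hmeas hle
      have : ∀ᵐ e ∂μ, ∀ k, h e ≤ H (t k) (e, z) := ae_all_iff.mpr fun k => hle (t k)
      filter_upwards [this] with e he
      exact le_ciInf he
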